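/- Let X and Y be random variables on a finite probability space. For any c > 0, the joint t-entropy dominates each marginal: H_c(X,Y) ≥ max{H_c(X), H_c(Y)}. -/
import Mathlib

open Real

/-- Joint t-entropy of a joint pmf `p : Fin n → Fin m → ℝ`. -/
noncomputable def tEntropyJoint {n m : ℕ} (c : ℝ) (p : Fin n → Fin m → ℝ) : ℝ :=
  (∑ i, ∑ j, p i j * Real.arctan ((p i j) ^ (-c))) - Real.pi / 4

/-- t-entropy of the first marginal of a joint pmf. -/
noncomputable def tEntropyMargX {n m : ℕ} (c : ℝ) (p : Fin n → Fin m → ℝ) : ℝ :=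
  (∑ i, (∑ j, p i j) * Real.arctan ((∑ j, p i j) ^ (-c))) - Real.pi / 4

/-- t-entropy of the second marginal of a joint pmf. -/
noncomputable def tEntropyMargY {n m : ℕ} (c : ℝ) (p : Fin n → Fin m → ℝ) : ℝ :=
  (∑ j, (∑ i, p i j) * Real.arctan ((∑ i, p i j) ^ (-c))) - Real.pi / 4

private lemma term_le {c : ℝ} (hc : 0 < c) {a s : ℝ} (ha : 0 ≤ a) (has : a ≤ s) :
    a * Real.arctan (s ^ (-c)) ≤ a * Real.arctan (a ^ (-c)) := by
  rcases eq_or_lt_of_le ha with h | h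
  · simp [← h]
  · exact mul_le_mul_of_nonneg_left
      (Real.arctan_strictMono.monotone
        (Real.rpow_le_rpow_of_nonpos h has (by linarith))) ha

private lemma group_le {c : ℝ} (hc : 0 < c) {m : ℕ} (q : Fin m → ℝ)
    (hq : ∀ j, 0 ≤ q j) :
    (∑ j, q j) * Real.arctan ((∑ j, q j) ^ (-c)) ≤
      ∑ j, q j * Real.arctan ((q j) ^ (-c)) := by
  rw [Finset.sum_mul]
  apply Finset.sum_le_sum
  intro j _
  exact term_le hc (hq j) (Finset.single_le_sum (fun k _ => hq k) (Finset.mem_univ j))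

theorem tEntropy_joint_ge_max {n m : ℕ} (c : ℝ) (hc : 0 < c)
    (p : Fin n → Fin m → ℝ) (hp : ∀ i j, 0 ≤ p i j)
    (hsum : ∑ i, ∑ j, p i j = 1) :
    max (tEntropyMargX c p) (tEntropyMargY c p) ≤ tEntropyJoint c p := by
  unfold tEntropyMargX tEntropyMargY tEntropyJoint
  apply max_le <;> apply sub_le_sub_right
  · exact Finset.sum_le_sum fun i _ => group_le hc (p i) (hp i)
  · rw [Finset.sum_comm]
    exact Finset.sum_le_sum fun j _ => group_le hc (fun i => p i j) (fun i => hp i j)
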